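/- Let R be an associative ring with 1, n ≥ 3, m ≤ n−1, A a two-sided ideal of R. If g = diag(x,e) with x ∈ GL(m,R), x ≡ e mod A, and u = [[e,0],[w,e]] is block lower unitriangular with entries of w in a two-sided ideal C, then [g,u] = [[e,0],[w',e]] with all entries of w' in the ideal product C·A. -/

import Mathlib

open scoped commutatorElement

/-- Let `g = diag(x, e)` with `x ∈ GL(m,R)`, `x ≡ e mod A`, and let
`u = [[e, 0],[w, e]]` be block lower unitriangular with entries of `w` in `C`.
Then `[g,u] = [[e, 0],[w', e]]` with all entries of `w'` in the two-sided ideal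
product `C·A`. -/
theorem commutator_lower_unipotent {R : Type*} [Ring R] (n m : ℕ)
    (hn : 3 ≤ n) (hm1 : 1 ≤ m) (hm : m ≤ n - 1)
    (A C : TwoSidedIdeal R)
    (ξ : (Matrix (Fin m) (Fin m) R)ˣ)
    (hξ : ∀ i j, (ξ.val - 1) i j ∈ A)
    (w : Matrix (Fin (n - m)) (Fin m) R) (hw : ∀ i j, w i j ∈ C)
    (g u : (Matrix (Fin m ⊕ Fin (n - m)) (Fin m ⊕ Fin (n - m)) R)ˣ)
    (hg : g.val = Matrix.fromBlocks ξ.val 0 0 1)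
    (hu : u.val = Matrix.fromBlocks 1 0 w 1) :
    ∃ w' : Matrix (Fin (n - m)) (Fin m) R,
      (⁅g, u⁆).val = Matrix.fromBlocks 1 0 w' 1 ∧
      ∀ i j, w' i j ∈ TwoSidedIdeal.span {x | ∃ c ∈ C, ∃ a ∈ A, x = c * a} := by
  have hginv : (g⁻¹).val = Matrix.fromBlocks ((ξ⁻¹).val) 0 0 1 := by
    have h1 : (Matrix.fromBlocks (ξ⁻¹).val 0 0 1) * g.val = 1 := by
      rw [hg, Matrix.fromBlocks_multiply, ← Matrix.fromBlocks_one]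
      simp only [Matrix.mul_zero, Matrix.zero_mul, mul_zero, zero_mul, add_zero, zero_add,
        Matrix.mul_one, Matrix.one_mul, mul_one, one_mul, ← Units.val_mul, inv_mul_cancel,
        Units.val_one]
    calc (g⁻¹).val = 1 * (g⁻¹).val := (one_mul _).symm
      _ = (Matrix.fromBlocks ((ξ⁻¹).val) 0 0 1) * (g.val * (g⁻¹).val) := by rw [← mul_assoc, h1]
      _ = Matrix.fromBlocks ((ξ⁻¹).val) 0 0 1 := by
          rw [← Units.val_mul, mul_inv_cancel, Units.val_one, mul_one]
  have huinv : (u⁻¹).val = Matrix.fromBlocks 1 0 (-w) 1 := by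
    have h1 : (Matrix.fromBlocks (1 : Matrix (Fin m) (Fin m) R) 0 (-w) 1) * u.val = 1 := by
      rw [hu, Matrix.fromBlocks_multiply, ← Matrix.fromBlocks_one]
      simp only [Matrix.mul_zero, Matrix.zero_mul, mul_zero, zero_mul, add_zero, zero_add,
        Matrix.mul_one, Matrix.one_mul, mul_one, one_mul, neg_add_cancel]
    calc (u⁻¹).val = 1 * (u⁻¹).val := (one_mul _).symm
      _ = (Matrix.fromBlocks 1 0 (-w) 1) * (u.val * (u⁻¹).val) := by rw [← mul_assoc, h1]
      _ = Matrix.fromBlocks 1 0 (-w) 1 := by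
          rw [← Units.val_mul, mul_inv_cancel, Units.val_one, mul_one]
  refine ⟨w * ((ξ⁻¹).val - 1), ?_, ?_⟩
  · have : (⁅g, u⁆).val = g.val * u.val * (g⁻¹).val * (u⁻¹).val := by
      simp only [commutatorElement_def, Units.val_mul]
    have hxx : ξ.val * (ξ⁻¹).val = 1 := by
      rw [← Units.val_mul, mul_inv_cancel, Units.val_one]
    rw [this, hg, hu, hginv, huinv, Matrix.fromBlocks_multiply, Matrix.fromBlocks_multiply,
      Matrix.fromBlocks_multiply]
    simp only [Matrix.mul_zero, Matrix.zero_mul, mul_zero, zero_mul, add_zero, zero_add,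
      Matrix.mul_one, Matrix.one_mul, mul_one, one_mul, hxx]
    congr 1
    rw [Matrix.mul_sub, Matrix.mul_one, sub_eq_add_neg]
  · intro i j
    have hA : ∀ k l, ((ξ⁻¹).val - 1) k l ∈ A := by
      intro k l
      have heq : ((ξ⁻¹).val - 1)
          = (ξ⁻¹).val * (1 - ξ.val) := by
        rw [mul_sub, mul_one, ← Units.val_mul, inv_mul_cancel, Units.val_one]
      rw [heq, Matrix.mul_apply]
      refine sum_mem fun t _ => ?_
      refine A.mul_mem_left _ _ ?_
      have := hξ t l
      have h2 : (1 - ξ.val) t l = -((ξ.val - 1) t l) := by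
        simp [Matrix.sub_apply]
      rw [h2]
      exact A.neg_mem this
    rw [Matrix.mul_apply]
    refine sum_mem fun k _ => ?_
    exact TwoSidedIdeal.subset_span ⟨w i k, hw i k, _, hA k j, rfl⟩
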